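/- Let s ≥ 1 be an integer and let δ ∈ (0, 0.4931). Then there exists a constant c₁ > 0, depending only on δ, with the following property: for all p, n ≥ 1 and every matrix A ∈ ℝ^{p×n} whose 2s-RIP constant is at most δ, every s-sparse vector x̂ ∈ ℝⁿ, every ξ ≥ 0, every z ∈ ℝ^p with ‖z‖ ≤ ξ, and y = A x̂ + z, every minimizer x* of ‖x‖₁ over the set {x ∈ ℝⁿ : ‖Ax − y‖ ≤ ξ} satisfies ‖x* − x̂‖ ≤ c₁ ξ. -/

import Mathlib

open Filter Matrix MeasureTheory

/-- The map `x ↦ A x` from `ℝⁿ` to `ℝᵖ` with the Euclidean (`ℓ²`) structure. -/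
noncomputable def mulVecE {p n : ℕ} (A : Matrix (Fin p) (Fin n) ℝ)
    (x : EuclideanSpace ℝ (Fin n)) : EuclideanSpace ℝ (Fin p) :=
  (WithLp.equiv 2 (Fin p → ℝ)).symm (A.mulVec ((WithLp.equiv 2 (Fin n → ℝ)) x))

/-- The `ℓ¹` norm on `ℝⁿ`. -/
noncomputable def oneNorm {n : ℕ} (x : EuclideanSpace ℝ (Fin n)) : ℝ :=
  ∑ i, |x i|

/-- `x` is `s`-sparse: it has at most `s` nonzero entries. -/
def IsSparse {n : ℕ} (s : ℕ) (x : EuclideanSpace ℝ (Fin n)) : Prop :=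
  (Finset.univ.filter fun i => x i ≠ 0).card ≤ s

section SparseRecoveryAux
open Finset
lemma mulVecE_add {p n : ℕ} (A : Matrix (Fin p) (Fin n) ℝ) (x y : EuclideanSpace ℝ (Fin n)) :
    mulVecE A (x + y) = mulVecE A x + mulVecE A y := by
  simp [mulVecE, Matrix.mulVec_add]

lemma mulVecE_sub {p n : ℕ} (A : Matrix (Fin p) (Fin n) ℝ) (x y : EuclideanSpace ℝ (Fin n)) :
    mulVecE A (x - y) = mulVecE A x - mulVecE A y := by
  simp [mulVecE, Matrix.mulVec_sub]

lemma mulVecE_smul {p n : ℕ} (A : Matrix (Fin p) (Fin n) ℝ) (c : ℝ) (x : EuclideanSpace ℝ (Fin n)) :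
    mulVecE A (c • x) = c • mulVecE A x := by
  simp [mulVecE, Matrix.mulVec_smul]

lemma enorm_sq {m : ℕ} (v : EuclideanSpace ℝ (Fin m)) : ‖v‖^2 = ∑ i, (v i)^2 := by
  rw [← real_inner_self_eq_norm_sq]
  simp [PiLp.inner_apply, RCLike.inner_apply]
  rw [EuclideanSpace.norm_sq_eq]; simp




/-- selecting a top set for f -/
lemma exists_top {n : ℕ} (f : Fin n → ℝ) (s : ℕ) :
    ∃ T : Finset (Fin n), T.card = min s n ∧ ∀ i ∈ T, ∀ j ∉ T, f j ≤ f i := by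
  induction s with
  | zero => exact ⟨∅, by simp, by simp⟩
  | succ s ih =>
    obtain ⟨T, hcard, htop⟩ := ih
    rcases le_or_gt n s with hn | hn
    · refine ⟨T, ?_, htop⟩
      rw [hcard]
      omega
    · have hTn : T.card = s := by rw [hcard]; omega
      have hne : (Tᶜ : Finset (Fin n)).Nonempty := by
        rw [← Finset.card_pos, Finset.card_compl, hTn]
        have : Fintype.card (Fin n) = n := by simp
        omega
      obtain ⟨m, hm, hmax⟩ := Finset.exists_max_image (Tᶜ) f hne
      refine ⟨insert m T, ?_, ?_⟩
      · rw [Finset.card_insert_of_notMem (by simpa using hm), hTn]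
        omega
      · intro i hi j hj
        have hjT : j ∉ T := fun h => hj (Finset.mem_insert_of_mem h)
        have hjm : j ≠ m := fun h => hj (h ▸ Finset.mem_insert_self m T)
        rcases Finset.mem_insert.1 hi with rfl | hiT
        · exact hmax j (by simpa using hjT)
        · exact htop i hiT j hjT

/-- transfer: sum over S bounded by sum over a top set T with card S ≤ card T -/
lemma sum_le_top {n : ℕ} (f : Fin n → ℝ) (hf : ∀ i, 0 ≤ f i) (S T : Finset (Fin n))
    (hcard : S.card ≤ T.card) (htop : ∀ i ∈ T, ∀ j ∉ T, f j ≤ f i) :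
    ∑ i ∈ S, f i ≤ ∑ i ∈ T, f i := by
  have h1 : ∑ i ∈ S \ T, f i ≤ ∑ i ∈ T \ S, f i := by
    have hc : (S \ T).card ≤ (T \ S).card := by
      have := Finset.card_sdiff_add_card_inter S T
      have := Finset.card_sdiff_add_card_inter T S
      rw [Finset.inter_comm] at this
      omega
    rcases Finset.eq_empty_or_nonempty (S \ T) with he | hne
    · rw [he, Finset.sum_empty]
      exact Finset.sum_nonneg fun i _ => hf i
    · have hne' : (T \ S).Nonempty := by
        rw [← Finset.card_pos]
        have := Finset.card_pos.2 hne
        omega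
      obtain ⟨m, hm, hmin⟩ := Finset.exists_min_image (T \ S) f hne'
      calc ∑ i ∈ S \ T, f i ≤ ∑ _i ∈ S \ T, f m := by
            refine Finset.sum_le_sum fun i hi => ?_
            have hiT : i ∉ T := (Finset.mem_sdiff.1 hi).2
            exact htop m (Finset.mem_sdiff.1 hm).1 i hiT
        _ = (S \ T).card * f m := by rw [Finset.sum_const, nsmul_eq_mul]
        _ ≤ (T \ S).card * f m := by
            exact mul_le_mul_of_nonneg_right (by exact_mod_cast hc) (hf m)
        _ = ∑ _i ∈ T \ S, f m := by rw [Finset.sum_const, nsmul_eq_mul]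
        _ ≤ ∑ i ∈ T \ S, f i := Finset.sum_le_sum fun i hi => hmin i hi
  have e1 : ∑ i ∈ S, f i = ∑ i ∈ S ∩ T, f i + ∑ i ∈ S \ T, f i := by
    rw [Finset.sum_inter_add_sum_sdiff]
  have e2 : ∑ i ∈ T, f i = ∑ i ∈ T ∩ S, f i + ∑ i ∈ T \ S, f i := by
    rw [Finset.sum_inter_add_sum_sdiff]
  rw [e1, e2, Finset.inter_comm]
  linarith


def goodSet {n : ℕ} (s : ℕ) (α : ℝ) (S : Finset (Fin n)) : Set (EuclideanSpace ℝ (Fin n)) :=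
  {u | (∀ i, i ∉ S → u i = 0) ∧ (Finset.univ.filter fun i => u i ≠ 0).card ≤ s ∧ ∀ i, |u i| ≤ α}


noncomputable def fracSet {n : ℕ} (α : ℝ) (v : EuclideanSpace ℝ (Fin n)) : Finset (Fin n) :=
  Finset.univ.filter fun i => 0 < |v i| ∧ |v i| < α

lemma sum_abs_update {n : ℕ} (v : EuclideanSpace ℝ (Fin n)) (i : Fin n) (a : ℝ) :
    ∑ j, |Function.update v i a j| = ∑ j, |v j| - |v i| + |a| := by
  have h1 : (fun j => |Function.update v i a j|) = Function.update (fun j => |v j|) i |a| := by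
    funext j
    by_cases h : j = i
    · subst h; simp
    · rw [Function.update_of_ne h, Function.update_of_ne h]
  rw [show ∑ j, |Function.update v i a j| = ∑ j, (fun j => |Function.update v i a j|) j from rfl,
    h1, Finset.sum_update_of_mem (Finset.mem_univ i)]
  have h2 : ∑ j, |v j| = |v i| + ∑ j ∈ univ \ {i}, |v j| := by
    rw [← Finset.sum_update_of_mem (Finset.mem_univ i)]
    congr 1
    funext j
    by_cases h : j = i
    · subst h; simp
    · rw [Function.update_of_ne h]
  rw [h2]; ring

lemma frac_base_case {n s : ℕ} {α : ℝ} (hα : 0 ≤ α) (S : Finset (Fin n))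
    (v : EuclideanSpace ℝ (Fin n)) (hk : fracSet α v = ∅)
    (hsupp : ∀ i, i ∉ S → v i = 0) (hinf : ∀ i, |v i| ≤ α) (h1 : ∑ i, |v i| ≤ s * α) :
    v ∈ goodSet s α S := by
  refine ⟨hsupp, ?_, hinf⟩
  set D := Finset.univ.filter (fun i => v i ≠ 0) with hD
  have hvα : ∀ i ∈ D, |v i| = α := by
    intro i hiD
    have hvi : v i ≠ 0 := by simpa [hD] using hiD
    rcases eq_or_lt_of_le (hinf i) with h | h
    · exact h
    · exfalso
      have : i ∈ fracSet α v := by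
        simp only [fracSet, Finset.mem_filter, Finset.mem_univ, true_and]
        exact ⟨abs_pos.2 hvi, h⟩
      simp [hk] at this
  rcases eq_or_lt_of_le hα with h0 | hpos
  · have hD0 : D = ∅ := by
      rw [Finset.eq_empty_iff_forall_notMem]
      intro i hiD
      have hvi : v i ≠ 0 := by simpa [hD] using hiD
      have := hvα i hiD
      rw [← h0] at this
      exact hvi (abs_eq_zero.1 this)
    rw [hD0]
    simp
  · have hsum : (D.card : ℝ) * α ≤ (s : ℝ) * α := by
      have e1 : (D.card : ℝ) * α = ∑ i ∈ D, |v i| := by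
        rw [Finset.sum_congr rfl hvα, Finset.sum_const, nsmul_eq_mul]
      have e2 : ∑ i ∈ D, |v i| ≤ ∑ i, |v i| :=
        Finset.sum_le_sum_of_subset_of_nonneg (Finset.filter_subset _ _)
          (fun i _ _ => abs_nonneg _)
      linarith
    have := le_of_mul_le_mul_right hsum hpos
    exact_mod_cast this

lemma polytope {n s : ℕ} {α : ℝ} (hα : 0 ≤ α) (S : Finset (Fin n)) :
    ∀ N : ℕ, ∀ v : EuclideanSpace ℝ (Fin n),
      2 * (fracSet α v).card + (if ∑ i, |v i| < s * α then 1 else 0) ≤ N →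
      (∀ i, i ∉ S → v i = 0) → (∀ i, |v i| ≤ α) → (∑ i, |v i| ≤ s * α) →
      v ∈ convexHull ℝ (goodSet s α S) := by
  intro N
  induction N with
  | zero =>
    intro v hμ hsupp hinf h1
    have hk : fracSet α v = ∅ := by
      rw [← Finset.card_eq_zero]
      omega
    exact subset_convexHull ℝ _ (frac_base_case hα S v hk hsupp hinf h1)
  | succ N ih =>
    intro v hμ hsupp hinf h1
    rcases Finset.eq_empty_or_nonempty (fracSet α v) with hk | ⟨i, hi⟩
    · exact subset_convexHull ℝ _ (frac_base_case hα S v hk hsupp hinf h1)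
    have hif : 0 < |v i| ∧ |v i| < α := by
      simpa [fracSet] using hi
    have hvi : v i ≠ 0 := abs_pos.1 hif.1
    have hαpos : 0 < α := lt_of_le_of_lt (abs_nonneg _) hif.2
    have hiS : i ∈ S := by
      by_contra h
      exact hvi (hsupp i h)
    -- sign of v i
    set c : ℝ := if 0 < v i then 1 else -1 with hcdef
    have hvc : v i = c * |v i| := by
      rcases hvi.lt_or_gt with h | h
      · simp [hcdef, not_lt.2 h.le, abs_of_neg h]
      · simp [hcdef, h, abs_of_pos h]
    have habs : ∀ e : ℝ, |v i + e * c| = abs (|v i| + e) := by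
      intro e
      have h1' : v i + e * c = c * (|v i| + e) := by linear_combination hvc
      have hc : |c| = 1 := by
        rcases hvi.lt_or_gt with h | h
        · simp [hcdef, not_lt.2 h.le]
        · simp [hcdef, h]
      rw [h1', abs_mul, hc, one_mul]
    -- generic combination step
    have combine : ∀ (vp vm : EuclideanSpace ℝ (Fin n)) (ep em : ℝ), 0 < ep → 0 < em →
        (∀ l, em * vp l + ep * vm l = (ep + em) * v l) →
        vp ∈ convexHull ℝ (goodSet s α S) → vm ∈ convexHull ℝ (goodSet s α S) →
        v ∈ convexHull ℝ (goodSet s α S) := by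
      intro vp vm ep em hep hem hcomb mp mm
      have hsum : 0 < ep + em := by linarith
      have heq : v = (em / (ep + em)) • vp + (ep / (ep + em)) • vm := by
        ext l
        have h := hcomb l
        have : ((em / (ep + em)) • vp + (ep / (ep + em)) • vm) l
            = (em / (ep + em)) * vp l + (ep / (ep + em)) * vm l := by
          simp
        rw [this]
        field_simp
        linarith
      rw [heq]
      exact (convex_convexHull ℝ (goodSet s α S)) mp mm
        (by positivity) (by positivity) (by field_simp; ring)
    rcases eq_or_lt_of_le h1 with htight | hslack
    · -- Case A : ∑ |v| = s * α ; find a second fractional coordinate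
      have hμ2 : 2 * (fracSet α v).card ≤ N + 1 := by omega
      obtain ⟨j, hj, hji⟩ : ∃ j, j ∈ fracSet α v ∧ j ≠ i := by
        by_contra hcon
        push_neg at hcon
        set D := (Finset.univ.erase i).filter (fun j => v j ≠ 0) with hD
        have hDα : ∀ j ∈ D, |v j| = α := by
          intro j hjD
          have hj' : j ≠ i ∧ v j ≠ 0 := by
            simpa [hD, Finset.mem_filter, Finset.mem_erase] using hjD
          rcases eq_or_lt_of_le (hinf j) with h | h
          · exact h
          · exact absurd (hcon j (by
              simp only [fracSet, Finset.mem_filter, Finset.mem_univ, true_and]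
              exact ⟨abs_pos.2 hj'.2, h⟩)) hj'.1
        have hsplit : ∑ l, |v l| = |v i| + ∑ l ∈ Finset.univ.erase i, |v l| :=
          (Finset.add_sum_erase _ _ (Finset.mem_univ i)).symm
        have hDsum : ∑ l ∈ Finset.univ.erase i, |v l| = (D.card : ℝ) * α := by
          have e1 : ∑ l ∈ D, |v l| = ∑ l ∈ Finset.univ.erase i, |v l| := by
            apply Finset.sum_subset (Finset.filter_subset _ _)
            intro j hj1 hj2
            have : v j = 0 := by
              by_contra h
              exact hj2 (Finset.mem_filter.2 ⟨hj1, h⟩)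
            simp [this]
          rw [← e1, Finset.sum_congr rfl hDα, Finset.sum_const, nsmul_eq_mul]
        have hiα : |v i| = ((s : ℝ) - D.card) * α := by
          rw [hsplit, hDsum] at htight
          linarith
        have hds : (D.card : ℝ) + 1 ≤ (s : ℝ) := by
          have h2 : (D.card : ℝ) < s := by nlinarith [hif.1, hif.2]
          have h3 : D.card < s := by exact_mod_cast h2
          exact_mod_cast Nat.succ_le_of_lt h3
        nlinarith [hif.2, mul_nonneg (by linarith : (0:ℝ) ≤ (s : ℝ) - D.card - 1) hα]
      have hjf : 0 < |v j| ∧ |v j| < α := by simpa [fracSet] using hj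
      have hvj : v j ≠ 0 := abs_pos.1 hjf.1
      have hjS : j ∈ S := by
        by_contra h
        exact hvj (hsupp j h)
      set cj : ℝ := if 0 < v j then 1 else -1 with hcjdef
      have hvcj : v j = cj * |v j| := by
        rcases hvj.lt_or_gt with h | h
        · simp [hcjdef, not_lt.2 h.le, abs_of_neg h]
        · simp [hcjdef, h, abs_of_pos h]
      have habsj : ∀ e : ℝ, |v j + e * cj| = abs (|v j| + e) := by
        intro e
        have h1' : v j + e * cj = cj * (|v j| + e) := by linear_combination hvcj
        have hc : |cj| = 1 := by
          rcases hvj.lt_or_gt with h | h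
          · simp [hcjdef, not_lt.2 h.le]
          · simp [hcjdef, h]
        rw [h1', abs_mul, hc, one_mul]
      -- the two children
      set ep : ℝ := min (α - |v i|) (|v j|) with hepdef
      set em : ℝ := min (|v i|) (α - |v j|) with hemdef
      have hep : 0 < ep := lt_min (by linarith [hif.2]) hjf.1
      have hem : 0 < em := lt_min hif.1 (by linarith [hjf.2])
      set vp : EuclideanSpace ℝ (Fin n) :=
        WithLp.toLp 2 (Function.update (Function.update v i (v i + ep * c)) j (v j + (-ep) * cj)) with hvpdef
      set vm : EuclideanSpace ℝ (Fin n) :=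
        WithLp.toLp 2 (Function.update (Function.update v i (v i + (-em) * c)) j (v j + em * cj)) with hvmdef
      have hvp_apply : ∀ l, vp l = if l = j then v j + (-ep) * cj
          else if l = i then v i + ep * c else v l := by
        intro l
        by_cases h1' : l = j
        · subst h1'; simp [hvpdef]
        · by_cases h2' : l = i
          · subst h2'; rw [hvpdef, WithLp.ofLp_toLp, Function.update_of_ne h1', Function.update_self]
            simp [h1']
          · rw [hvpdef, WithLp.ofLp_toLp, Function.update_of_ne h1', Function.update_of_ne h2']
            simp [h1', h2']
      have hvm_apply : ∀ l, vm l = if l = j then v j + em * cj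
          else if l = i then v i + (-em) * c else v l := by
        intro l
        by_cases h1' : l = j
        · subst h1'; simp [hvmdef]
        · by_cases h2' : l = i
          · subst h2'; rw [hvmdef, WithLp.ofLp_toLp, Function.update_of_ne h1', Function.update_self]
            simp [h1']
          · rw [hvmdef, WithLp.ofLp_toLp, Function.update_of_ne h1', Function.update_of_ne h2']
            simp [h1', h2']
      -- facts about vp
      have habs_pi : |v i + ep * c| = |v i| + ep := by
        rw [habs, abs_of_nonneg (by linarith [abs_nonneg (v i)])]
      have habs_pj : |v j + (-ep) * cj| = |v j| - ep := by
        rw [habsj, abs_of_nonneg (by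
          have := min_le_right (α - |v i|) (|v j|)
          rw [← hepdef] at this
          linarith)]
        ring
      have habs_mi : |v i + (-em) * c| = |v i| - em := by
        rw [habs, abs_of_nonneg (by
          have := min_le_left (|v i|) (α - |v j|)
          rw [← hemdef] at this
          linarith)]
        ring
      have habs_mj : |v j + em * cj| = |v j| + em := by
        rw [habsj, abs_of_nonneg (by linarith [abs_nonneg (v j)])]
      have hsum_p : ∑ l, |vp l| = ∑ l, |v l| := by
        have e1 : ∑ l, |vp l|
            = (∑ l, |v l| - |v i| + |v i + ep * c|) - |v j| + |v j + (-ep) * cj| := by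
          rw [hvpdef, WithLp.ofLp_toLp, sum_abs_update, WithLp.ofLp_toLp, Function.update_of_ne hji, sum_abs_update]
        rw [e1, habs_pi, habs_pj]; ring
      have hsum_m : ∑ l, |vm l| = ∑ l, |v l| := by
        have e1 : ∑ l, |vm l|
            = (∑ l, |v l| - |v i| + |v i + (-em) * c|) - |v j| + |v j + em * cj| := by
          rw [hvmdef, WithLp.ofLp_toLp, sum_abs_update, WithLp.ofLp_toLp, Function.update_of_ne hji, sum_abs_update]
        rw [e1, habs_mi, habs_mj]; ring
      have hepl : ep ≤ α - |v i| := min_le_left _ _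
      have heml : em ≤ α - |v j| := min_le_right _ _
      have hinf_p : ∀ l, |vp l| ≤ α := by
        intro l
        rw [hvp_apply l]
        split_ifs with h1' h2'
        · rw [habs_pj]; linarith [hinf j]
        · rw [habs_pi]; linarith
        · exact hinf l
      have hinf_m : ∀ l, |vm l| ≤ α := by
        intro l
        rw [hvm_apply l]
        split_ifs with h1' h2'
        · rw [habs_mj]; linarith
        · rw [habs_mi]; linarith [hinf i]
        · exact hinf l
      have hsupp_p : ∀ l, l ∉ S → vp l = 0 := by
        intro l hl
        rw [hvp_apply l]
        split_ifs with h1' h2'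
        · exact absurd (h1' ▸ hjS) hl
        · exact absurd (h2' ▸ hiS) hl
        · exact hsupp l hl
      have hsupp_m : ∀ l, l ∉ S → vm l = 0 := by
        intro l hl
        rw [hvm_apply l]
        split_ifs with h1' h2'
        · exact absurd (h1' ▸ hjS) hl
        · exact absurd (h2' ▸ hiS) hl
        · exact hsupp l hl
      have hkpos : 1 ≤ (fracSet α v).card := Finset.card_pos.2 ⟨i, hi⟩
      have hcard_p : (fracSet α vp).card < (fracSet α v).card := by
        rcases min_cases (α - |v i|) (|v j|) with ⟨he, _⟩ | ⟨he, _⟩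
        · -- ep = α - |v i| : coordinate i exits
          have hev : ep = α - |v i| := by rw [hepdef]; exact he
          have hsub : fracSet α vp ⊆ (fracSet α v).erase i := by
            intro l hl
            simp only [fracSet, Finset.mem_filter, Finset.mem_univ, true_and] at hl
            rw [hvp_apply l] at hl
            rcases eq_or_ne l j with rfl | hlj
            · simp only [if_pos rfl] at hl
              rw [Finset.mem_erase]
              exact ⟨hji, hj⟩
            · rcases eq_or_ne l i with rfl | hli
              · rw [if_neg hlj, if_pos rfl, habs_pi, hev] at hl
                exfalso
                have : |v l| + (α - |v l|) = α := by ring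
                rw [this] at hl
                exact lt_irrefl _ hl.2
              · rw [if_neg hlj, if_neg hli] at hl
                rw [Finset.mem_erase]
                refine ⟨hli, ?_⟩
                simp only [fracSet, Finset.mem_filter, Finset.mem_univ, true_and]
                exact hl
          calc (fracSet α vp).card ≤ ((fracSet α v).erase i).card := Finset.card_le_card hsub
            _ < (fracSet α v).card := by
                rw [Finset.card_erase_of_mem hi]; omega
        · -- ep = |v j| : coordinate j exits
          have hev : ep = |v j| := by rw [hepdef]; exact he
          have hsub : fracSet α vp ⊆ (fracSet α v).erase j := by
            intro l hl
            simp only [fracSet, Finset.mem_filter, Finset.mem_univ, true_and] at hl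
            rw [hvp_apply l] at hl
            rcases eq_or_ne l j with rfl | hlj
            · rw [if_pos rfl, habs_pj, hev] at hl
              exfalso
              have : |v l| - |v l| = 0 := by ring
              rw [this] at hl
              exact lt_irrefl _ hl.1
            · rcases eq_or_ne l i with rfl | hli
              · rw [Finset.mem_erase]
                exact ⟨hlj, hi⟩
              · rw [if_neg hlj, if_neg hli] at hl
                rw [Finset.mem_erase]
                refine ⟨hlj, ?_⟩
                simp only [fracSet, Finset.mem_filter, Finset.mem_univ, true_and]
                exact hl
          calc (fracSet α vp).card ≤ ((fracSet α v).erase j).card := Finset.card_le_card hsub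
            _ < (fracSet α v).card := by
                rw [Finset.card_erase_of_mem hj]; omega
      have hcard_m : (fracSet α vm).card < (fracSet α v).card := by
        rcases min_cases (|v i|) (α - |v j|) with ⟨he, _⟩ | ⟨he, _⟩
        · -- em = |v i| : coordinate i exits
          have hev : em = |v i| := by rw [hemdef]; exact he
          have hsub : fracSet α vm ⊆ (fracSet α v).erase i := by
            intro l hl
            simp only [fracSet, Finset.mem_filter, Finset.mem_univ, true_and] at hl
            rw [hvm_apply l] at hl
            rcases eq_or_ne l j with rfl | hlj
            · rw [Finset.mem_erase]
              exact ⟨hji, hj⟩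
            · rcases eq_or_ne l i with rfl | hli
              · rw [if_neg hlj, if_pos rfl, habs_mi, hev] at hl
                exfalso
                have : |v l| - |v l| = 0 := by ring
                rw [this] at hl
                exact lt_irrefl _ hl.1
              · rw [if_neg hlj, if_neg hli] at hl
                rw [Finset.mem_erase]
                refine ⟨hli, ?_⟩
                simp only [fracSet, Finset.mem_filter, Finset.mem_univ, true_and]
                exact hl
          calc (fracSet α vm).card ≤ ((fracSet α v).erase i).card := Finset.card_le_card hsub
            _ < (fracSet α v).card := by
                rw [Finset.card_erase_of_mem hi]; omega
        · -- em = α - |v j| : coordinate j exits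
          have hev : em = α - |v j| := by rw [hemdef]; exact he
          have hsub : fracSet α vm ⊆ (fracSet α v).erase j := by
            intro l hl
            simp only [fracSet, Finset.mem_filter, Finset.mem_univ, true_and] at hl
            rw [hvm_apply l] at hl
            rcases eq_or_ne l j with rfl | hlj
            · rw [if_pos rfl, habs_mj, hev] at hl
              exfalso
              have : |v l| + (α - |v l|) = α := by ring
              rw [this] at hl
              exact lt_irrefl _ hl.2
            · rcases eq_or_ne l i with rfl | hli
              · rw [Finset.mem_erase]
                exact ⟨hlj, hi⟩
              · rw [if_neg hlj, if_neg hli] at hl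
                rw [Finset.mem_erase]
                refine ⟨hlj, ?_⟩
                simp only [fracSet, Finset.mem_filter, Finset.mem_univ, true_and]
                exact hl
          calc (fracSet α vm).card ≤ ((fracSet α v).erase j).card := Finset.card_le_card hsub
            _ < (fracSet α v).card := by
                rw [Finset.card_erase_of_mem hj]; omega
      have hμ_p : 2 * (fracSet α vp).card + (if ∑ l, |vp l| < s * α then 1 else 0) ≤ N := by
        have hle : (if ∑ l, |vp l| < (s:ℝ) * α then 1 else 0) ≤ 1 := by split <;> omega
        omega
      have hμ_m : 2 * (fracSet α vm).card + (if ∑ l, |vm l| < s * α then 1 else 0) ≤ N := by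
        have hle : (if ∑ l, |vm l| < (s:ℝ) * α then 1 else 0) ≤ 1 := by split <;> omega
        omega
      have mp := ih vp hμ_p hsupp_p hinf_p (by rw [hsum_p]; exact h1)
      have mm := ih vm hμ_m hsupp_m hinf_m (by rw [hsum_m]; exact h1)
      apply combine vp vm ep em hep hem _ mp mm
      intro l
      rw [hvp_apply l, hvm_apply l]
      split_ifs with h1' h2'
      · subst h1'; ring
      · subst h2'; ring
      · ring
    · -- Case B : ∑ |v| < s * α
      set ep : ℝ := min (α - |v i|) ((s:ℝ) * α - ∑ l, |v l|) with hepdef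
      set em : ℝ := |v i| with hemdef
      have hep : 0 < ep := lt_min (by linarith [hif.2]) (by linarith)
      have hem : 0 < em := hif.1
      set vp : EuclideanSpace ℝ (Fin n) := WithLp.toLp 2 (Function.update v i (v i + ep * c)) with hvpdef
      set vm : EuclideanSpace ℝ (Fin n) := WithLp.toLp 2 (Function.update v i (v i + (-em) * c)) with hvmdef
      have hvp_apply : ∀ l, vp l = if l = i then v i + ep * c else v l := by
        intro l
        by_cases h' : l = i
        · subst h'; simp [hvpdef]
        · rw [hvpdef, WithLp.ofLp_toLp, Function.update_of_ne h']
          simp [h']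
      have hvm_apply : ∀ l, vm l = if l = i then v i + (-em) * c else v l := by
        intro l
        by_cases h' : l = i
        · subst h'; simp [hvmdef]
        · rw [hvmdef, WithLp.ofLp_toLp, Function.update_of_ne h']
          simp [h']
      have hepl : ep ≤ α - |v i| := min_le_left _ _
      have hepr : ep ≤ (s:ℝ) * α - ∑ l, |v l| := min_le_right _ _
      have habs_pi : |v i + ep * c| = |v i| + ep := by
        rw [habs, abs_of_nonneg (by linarith [abs_nonneg (v i)])]
      have habs_mi : |v i + (-em) * c| = 0 := by
        rw [habs, hemdef]
        simp
      have hsum_p : ∑ l, |vp l| = ∑ l, |v l| + ep := by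
        rw [hvpdef, WithLp.ofLp_toLp, sum_abs_update, habs_pi]; ring
      have hsum_m : ∑ l, |vm l| = ∑ l, |v l| - |v i| := by
        rw [hvmdef, WithLp.ofLp_toLp, sum_abs_update, habs_mi]; ring
      have hinf_p : ∀ l, |vp l| ≤ α := by
        intro l
        rw [hvp_apply l]
        split_ifs with h'
        · subst h'; rw [habs_pi]; linarith
        · exact hinf l
      have hinf_m : ∀ l, |vm l| ≤ α := by
        intro l
        rw [hvm_apply l]
        split_ifs with h'
        · subst h'; rw [habs_mi]; exact hα
        · exact hinf l
      have hsupp_p : ∀ l, l ∉ S → vp l = 0 := by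
        intro l hl
        rw [hvp_apply l]
        split_ifs with h'
        · exact absurd (h' ▸ hiS) hl
        · exact hsupp l hl
      have hsupp_m : ∀ l, l ∉ S → vm l = 0 := by
        intro l hl
        rw [hvm_apply l]
        split_ifs with h'
        · exact absurd (h' ▸ hiS) hl
        · exact hsupp l hl
      have hkpos : 1 ≤ (fracSet α v).card := Finset.card_pos.2 ⟨i, hi⟩
      have hμ' : 2 * (fracSet α v).card + 1 ≤ N + 1 := by
        rw [if_pos hslack] at hμ
        exact hμ
      have hcard_m : (fracSet α vm).card < (fracSet α v).card := by
        have hsub : fracSet α vm ⊆ (fracSet α v).erase i := by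
          intro l hl
          simp only [fracSet, Finset.mem_filter, Finset.mem_univ, true_and] at hl
          rw [hvm_apply l] at hl
          rcases eq_or_ne l i with rfl | hli
          · rw [if_pos rfl, habs_mi] at hl
            exact absurd hl.1 (lt_irrefl 0)
          · rw [if_neg hli] at hl
            rw [Finset.mem_erase]
            refine ⟨hli, ?_⟩
            simp only [fracSet, Finset.mem_filter, Finset.mem_univ, true_and]
            exact hl
        calc (fracSet α vm).card ≤ ((fracSet α v).erase i).card := Finset.card_le_card hsub
          _ < (fracSet α v).card := by rw [Finset.card_erase_of_mem hi]; omega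
      have hμ_m : 2 * (fracSet α vm).card + (if ∑ l, |vm l| < s * α then 1 else 0) ≤ N := by
        have hle : (if ∑ l, |vm l| < (s:ℝ) * α then 1 else 0) ≤ 1 := by split <;> omega
        omega
      have hμ_p : 2 * (fracSet α vp).card + (if ∑ l, |vp l| < s * α then 1 else 0) ≤ N := by
        rcases min_cases (α - |v i|) ((s:ℝ) * α - ∑ l, |v l|) with ⟨he, _⟩ | ⟨he, _⟩
        · -- coordinate i exits
          have hev : ep = α - |v i| := by rw [hepdef]; exact he
          have hcard_p : (fracSet α vp).card < (fracSet α v).card := by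
            have hsub : fracSet α vp ⊆ (fracSet α v).erase i := by
              intro l hl
              simp only [fracSet, Finset.mem_filter, Finset.mem_univ, true_and] at hl
              rw [hvp_apply l] at hl
              rcases eq_or_ne l i with rfl | hli
              · rw [if_pos rfl, habs_pi, hev] at hl
                exfalso
                have : |v l| + (α - |v l|) = α := by ring
                rw [this] at hl
                exact lt_irrefl _ hl.2
              · rw [if_neg hli] at hl
                rw [Finset.mem_erase]
                refine ⟨hli, ?_⟩
                simp only [fracSet, Finset.mem_filter, Finset.mem_univ, true_and]
                exact hl
            calc (fracSet α vp).card ≤ ((fracSet α v).erase i).card := Finset.card_le_card hsub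
              _ < (fracSet α v).card := by rw [Finset.card_erase_of_mem hi]; omega
          have hle : (if ∑ l, |vp l| < (s:ℝ) * α then 1 else 0) ≤ 1 := by split <;> omega
          omega
        · -- sum becomes tight
          have hev : ep = (s:ℝ) * α - ∑ l, |v l| := by rw [hepdef]; exact he
          have htight' : ∑ l, |vp l| = (s:ℝ) * α := by
            rw [hsum_p, hev]; ring
          have hind : (if ∑ l, |vp l| < (s:ℝ) * α then 1 else 0) = 0 := by
            rw [if_neg (by rw [htight']; exact lt_irrefl _)]
          have hcard_p : (fracSet α vp).card ≤ (fracSet α v).card := by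
            apply Finset.card_le_card
            intro l hl
            simp only [fracSet, Finset.mem_filter, Finset.mem_univ, true_and] at hl
            rw [hvp_apply l] at hl
            rcases eq_or_ne l i with rfl | hli
            · exact hi
            · rw [if_neg hli] at hl
              simp only [fracSet, Finset.mem_filter, Finset.mem_univ, true_and]
              exact hl
          omega
      have mp := ih vp hμ_p hsupp_p hinf_p (by rw [hsum_p]; linarith)
      have mm := ih vm hμ_m hsupp_m hinf_m (by rw [hsum_m]; linarith [hif.1])
      apply combine vp vm ep em hep hem _ mp mm
      intro l
      rw [hvp_apply l, hvm_apply l]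
      split_ifs with h'
      · subst h'; ring
      · ring


end SparseRecoveryAux

set_option maxHeartbeats 1000000 in
/-- Noisy sparse recovery by `ℓ¹` minimization under the RIP
(Theorem 2, after Mo–Li): if the `2s`-RIP constant of `A` is at most
`δ < 0.4931`, then any `ℓ¹` minimizer over the feasible set recovers an
`s`-sparse vector up to `c₁ ξ`, where `c₁` depends only on `δ`. -/
theorem sparse_recovery_l1 (s : ℕ) (hs : 1 ≤ s) (δ : ℝ)
    (hδ : δ ∈ Set.Ioo (0 : ℝ) 0.4931) :
    ∃ c₁ : ℝ, 0 < c₁ ∧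
      ∀ (p n : ℕ), 1 ≤ p → 1 ≤ n →
        ∀ A : Matrix (Fin p) (Fin n) ℝ,
          -- the `2s`-RIP constant of `A` is at most `δ`
          (∀ x : EuclideanSpace ℝ (Fin n), IsSparse (2 * s) x →
            (1 - δ) * ‖x‖ ^ 2 ≤ ‖mulVecE A x‖ ^ 2 ∧
              ‖mulVecE A x‖ ^ 2 ≤ (1 + δ) * ‖x‖ ^ 2) →
        ∀ xhat : EuclideanSpace ℝ (Fin n), IsSparse s xhat →
        ∀ ξ : ℝ, 0 ≤ ξ →
        ∀ z : EuclideanSpace ℝ (Fin p), ‖z‖ ≤ ξ →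
        ∀ y : EuclideanSpace ℝ (Fin p), y = mulVecE A xhat + z →
        ∀ xstar : EuclideanSpace ℝ (Fin n),
          -- `xstar` is a minimizer of the `ℓ¹` norm over the feasible set
          ‖mulVecE A xstar - y‖ ≤ ξ →
          (∀ x : EuclideanSpace ℝ (Fin n), ‖mulVecE A x - y‖ ≤ ξ →
            oneNorm xstar ≤ oneNorm x) →
          ‖xstar - xhat‖ ≤ c₁ * ξ := by
  obtain ⟨hδ0, hδ1⟩ := hδ
  have hδhalf : δ < 1/2 := by
    have : (0.4931 : ℝ) < 1/2 := by norm_num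
    linarith
  have hden : 0 < 1 - 2*δ := by linarith
  refine ⟨8 / (1 - 2*δ), by positivity, ?_⟩
  intro p n hp hn A hRIP xhat hxhat ξ hξ z hz y hy xstar hfeas hmin
  set h : EuclideanSpace ℝ (Fin n) := xstar - xhat with hh
  -- tube constraint
  have hAh : ‖mulVecE A h‖ ≤ 2 * ξ := by
    have h1 : mulVecE A h = (mulVecE A xstar - y) + (y - mulVecE A xhat) := by
      rw [hh, mulVecE_sub]; abel
    have h2 : y - mulVecE A xhat = z := by rw [hy]; abel
    calc ‖mulVecE A h‖ ≤ ‖mulVecE A xstar - y‖ + ‖y - mulVecE A xhat‖ := by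
          rw [h1]; exact norm_add_le _ _
      _ ≤ ξ + ξ := by rw [h2]; exact add_le_add hfeas hz
      _ = 2*ξ := by ring
  -- xhat is feasible, so l1 minimality applies
  have hfeas_hat : ‖mulVecE A xhat - y‖ ≤ ξ := by
    have h2 : mulVecE A xhat - y = -z := by rw [hy]; abel
    rw [h2, norm_neg]; exact hz
  have hl1 : oneNorm xstar ≤ oneNorm xhat := hmin xhat hfeas_hat
  -- cone constraint over the support of xhat
  set S := Finset.univ.filter (fun i => xhat i ≠ 0) with hSdef
  have hcone_S : ∑ i ∈ Sᶜ, |h i| ≤ ∑ i ∈ S, |h i| := by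
    have e0 : ∀ i ∈ Sᶜ, |xstar i| = |h i| := by
      intro i hi
      have : xhat i = 0 := by
        by_contra hc
        simp [hSdef, Finset.mem_compl, Finset.mem_filter] at hi
        exact hc hi
      have : h i = xstar i := by
        rw [hh]
        show xstar i - xhat i = xstar i
        rw [this, sub_zero]
      rw [this]
    have e1 : ∑ i ∈ S, (|xhat i| - |h i|) ≤ ∑ i ∈ S, |xstar i| := by
      apply Finset.sum_le_sum
      intro i _
      have : |xhat i| - |xstar i| ≤ |h i| := by
        rw [hh]
        calc |xhat i| - |xstar i| ≤ |xhat i - xstar i| := abs_sub_abs_le_abs_sub _ _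
          _ = |(xstar - xhat : EuclideanSpace ℝ (Fin n)) i| := by
              rw [abs_sub_comm]
              congr 1
      linarith
    have e2 : ∑ i ∈ S, |xstar i| + ∑ i ∈ Sᶜ, |xstar i| = oneNorm xstar :=
      Finset.sum_add_sum_compl S _
    have e3 : ∑ i ∈ S, |xhat i| + ∑ i ∈ Sᶜ, |xhat i| = oneNorm xhat :=
      Finset.sum_add_sum_compl S _
    have e4 : ∑ i ∈ Sᶜ, |xhat i| = 0 := by
      apply Finset.sum_eq_zero
      intro i hi
      simp [hSdef, Finset.mem_compl, Finset.mem_filter] at hi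
      simp [hi]
    have e5 : ∑ i ∈ Sᶜ, |xstar i| = ∑ i ∈ Sᶜ, |h i| := Finset.sum_congr rfl e0
    have e6 : ∑ i ∈ S, (|xhat i| - |h i|) = ∑ i ∈ S, |xhat i| - ∑ i ∈ S, |h i| :=
      Finset.sum_sub_distrib _ _
    linarith
  -- choose the top index set T
  obtain ⟨T, hTcard, hTtop⟩ := exists_top (fun i => |h i|) s
  have hScard : S.card ≤ T.card := by
    rw [hTcard]
    have h1' : S.card ≤ s := hxhat
    have h2' : S.card ≤ n := le_trans (Finset.card_le_univ S) (by simp)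
    omega
  have hST : ∑ i ∈ S, |h i| ≤ ∑ i ∈ T, |h i| :=
    sum_le_top _ (fun i => abs_nonneg _) S T hScard hTtop
  have hcompl : ∀ U : Finset (Fin n), ∑ i ∈ U, |h i| + ∑ i ∈ Uᶜ, |h i| = ∑ i, |h i| :=
    fun U => Finset.sum_add_sum_compl U _
  have hcone_T : ∑ i ∈ Tᶜ, |h i| ≤ ∑ i ∈ T, |h i| := by
    have := hcompl S
    have := hcompl T
    linarith
  set tα := ∑ i ∈ T, |h i| with htαdef
  have htαnn : 0 ≤ tα := Finset.sum_nonneg fun i _ => abs_nonneg _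
  set α := tα / s with hαdef
  have hspos : (0:ℝ) < s := by exact_mod_cast hs
  have hαnn : 0 ≤ α := div_nonneg htαnn (le_of_lt hspos)
  have hsα : (s:ℝ) * α = tα := by
    rw [hαdef]
    field_simp
  -- split h = t + w
  set t : EuclideanSpace ℝ (Fin n) := WithLp.toLp 2 (fun i => if i ∈ T then h i else 0) with htdef
  set w : EuclideanSpace ℝ (Fin n) := WithLp.toLp 2 (fun i => if i ∈ T then 0 else h i) with hwdef
  have ht_apply : ∀ i, t i = if i ∈ T then h i else 0 := fun i => rfl
  have hw_apply : ∀ i, w i = if i ∈ T then 0 else h i := fun i => rfl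
  have htw : h = t + w := by
    ext i
    have : (t + w) i = t i + w i := rfl
    rw [this, ht_apply, hw_apply]
    by_cases hi : i ∈ T <;> simp [hi]
  -- ℓ∞ bound on w
  have hw_inf : ∀ i, |w i| ≤ α := by
    intro i
    rw [hw_apply]
    by_cases hi : i ∈ T
    · simp [hi, hαnn]
    · rw [if_neg hi]
      rcases le_or_gt s n with hsn | hsn
      · have hTs : T.card = s := by rw [hTcard]; omega
        have hsum : (T.card : ℝ) * |h i| ≤ tα := by
          rw [htαdef]
          calc (T.card : ℝ) * |h i| = ∑ _j ∈ T, |h i| := by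
                rw [Finset.sum_const, nsmul_eq_mul]
            _ ≤ ∑ j ∈ T, |h j| := Finset.sum_le_sum fun j hj => hTtop j hj i hi
        rw [hTs] at hsum
        rw [hαdef, le_div_iff₀ hspos]
        linarith
      · exfalso
        have hTuniv : T = Finset.univ := by
          apply Finset.eq_univ_of_card
          rw [hTcard]
          simp
          omega
        rw [hTuniv] at hi
        exact hi (Finset.mem_univ i)
  -- ℓ1 bound on w
  have hw_l1 : ∑ i, |w i| ≤ (s:ℝ) * α := by
    have e1 : ∑ i, |w i| = ∑ i ∈ Tᶜ, |h i| := by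
      rw [← Finset.sum_add_sum_compl T (fun i => |w i|)]
      have e2 : ∑ i ∈ T, |w i| = 0 := Finset.sum_eq_zero fun i hi => by
        rw [hw_apply, if_pos hi, abs_zero]
      have e3 : ∑ i ∈ Tᶜ, |w i| = ∑ i ∈ Tᶜ, |h i| := Finset.sum_congr rfl fun i hi => by
        rw [hw_apply, if_neg (Finset.mem_compl.1 hi)]
      rw [e2, e3, zero_add]
    rw [e1, hsα]
    exact hcone_T
  -- w lies in the convex hull of good vectors
  have hw_supp : ∀ i, i ∉ Tᶜ → w i = 0 := by
    intro i hi
    rw [hw_apply, if_pos (by simpa using hi)]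
  have hw_mem : w ∈ convexHull ℝ (goodSet s α Tᶜ) := by
    apply polytope hαnn Tᶜ (2 * (fracSet α w).card + 1) w _ hw_supp hw_inf hw_l1
    split <;> omega
  -- norms of t
  have ht_sq : ∀ i, (t i)^2 = if i ∈ T then (h i)^2 else 0 := by
    intro i
    rw [ht_apply]
    by_cases hi : i ∈ T <;> simp [hi]
  have ht_norm : ‖t‖^2 = ∑ i ∈ T, (h i)^2 := by
    rw [enorm_sq]
    rw [Finset.sum_congr rfl (fun i _ => ht_sq i), Finset.sum_ite_mem, Finset.univ_inter]
  -- s * α^2 ≤ ‖t‖^2  (Cauchy–Schwarz)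
  have hsα2 : (s:ℝ) * α^2 ≤ ‖t‖^2 := by
    have hcs : tα^2 ≤ (T.card : ℝ) * ∑ i ∈ T, |h i|^2 := by
      rw [htαdef]
      have := sq_sum_le_card_mul_sum_sq (s := T) (f := fun i => |h i|)
      exact_mod_cast this
    have habs2 : ∑ i ∈ T, |h i|^2 = ∑ i ∈ T, (h i)^2 :=
      Finset.sum_congr rfl fun i _ => sq_abs _
    have hTles : (T.card : ℝ) ≤ s := by
      rw [hTcard]
      exact_mod_cast Nat.cast_le.2 (min_le_left s n)
    have hsq_nn : (0:ℝ) ≤ ∑ i ∈ T, (h i)^2 := Finset.sum_nonneg fun i _ => sq_nonneg _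
    have h1' : tα^2 ≤ (s:ℝ) * ‖t‖^2 := by
      rw [ht_norm]
      calc tα^2 ≤ (T.card : ℝ) * ∑ i ∈ T, (h i)^2 := by rw [← habs2]; exact hcs
        _ ≤ (s:ℝ) * ∑ i ∈ T, (h i)^2 := mul_le_mul_of_nonneg_right hTles hsq_nn
    have h2' : (s:ℝ) * α^2 * s = tα^2 := by
      rw [← hsα]; ring
    nlinarith [hspos]
  -- per-element estimates on the good set
  have key : ∀ u ∈ goodSet s α Tᶜ,
      -δ * ‖t‖^2 ≤ (inner ℝ (mulVecE A t) (mulVecE A u) : ℝ) := by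
    intro u hu
    obtain ⟨husupp, hucard, huinf⟩ := hu
    -- ‖u‖² ≤ s α²
    have hu_norm : ‖u‖^2 ≤ (s:ℝ) * α^2 := by
      rw [enorm_sq]
      set D := Finset.univ.filter (fun i => u i ≠ 0) with hDdef
      have e1 : ∑ i, (u i)^2 = ∑ i ∈ D, (u i)^2 := by
        rw [Finset.sum_filter_of_ne]
        intro i _ hne
        intro h0
        exact hne (by rw [h0]; ring)
      have e2 : ∑ i ∈ D, (u i)^2 ≤ ∑ i ∈ D, α^2 := by
        apply Finset.sum_le_sum
        intro i _
        have := huinf i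
        nlinarith [abs_nonneg (u i), sq_abs (u i)]
      have e3 : ∑ _i ∈ D, (α:ℝ)^2 = (D.card : ℝ) * α^2 := by
        rw [Finset.sum_const, nsmul_eq_mul]
      have e4 : (D.card : ℝ) ≤ s := by exact_mod_cast hucard
      calc ∑ i, (u i)^2 = ∑ i ∈ D, (u i)^2 := e1
        _ ≤ (D.card : ℝ) * α^2 := by rw [← e3]; exact e2
        _ ≤ (s:ℝ) * α^2 := mul_le_mul_of_nonneg_right e4 (sq_nonneg α)
    have hu_le_t : ‖u‖^2 ≤ ‖t‖^2 := le_trans hu_norm hsα2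
    -- orthogonality
    have horth : (inner ℝ t u : ℝ) = 0 := by
      rw [PiLp.inner_apply]
      apply Finset.sum_eq_zero
      intro i _
      by_cases hi : i ∈ T
      · have : u i = 0 := husupp i (by simpa using hi)
        simp [this]
      · have : t i = 0 := by rw [ht_apply, if_neg hi]
        simp [this]
    -- sparsity of t ± u
    have hsupp_sub : ∀ (v' : EuclideanSpace ℝ (Fin n)),
        (∀ i, v' i ≠ 0 → (i ∈ T ∨ u i ≠ 0)) →
        (Finset.univ.filter fun i => v' i ≠ 0).card ≤ 2 * s := by
      intro v' hv'
      have hsub : (Finset.univ.filter fun i => v' i ≠ 0) ⊆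
          T ∪ (Finset.univ.filter fun i => u i ≠ 0) := by
        intro i hi
        rw [Finset.mem_filter] at hi
        rcases hv' i hi.2 with hc | hc
        · exact Finset.mem_union_left _ hc
        · exact Finset.mem_union_right _ (Finset.mem_filter.2 ⟨Finset.mem_univ i, hc⟩)
      calc (Finset.univ.filter fun i => v' i ≠ 0).card
          ≤ (T ∪ (Finset.univ.filter fun i => u i ≠ 0)).card := Finset.card_le_card hsub
        _ ≤ T.card + (Finset.univ.filter fun i => u i ≠ 0).card := Finset.card_union_le _ _
        _ ≤ 2 * s := by
            rw [hTcard]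
            have := min_le_left s n
            omega
    have hsp_add : IsSparse (2*s) (t + u) := by
      apply hsupp_sub
      intro i hi
      by_cases hiT : i ∈ T
      · exact Or.inl hiT
      · right
        intro h0
        apply hi
        have : (t + u) i = t i + u i := rfl
        rw [this, ht_apply, if_neg hiT, h0, zero_add]
    have hsp_sub : IsSparse (2*s) (u - t) := by
      apply hsupp_sub
      intro i hi
      by_cases hiT : i ∈ T
      · exact Or.inl hiT
      · right
        intro h0
        apply hi
        have : (u - t) i = u i - t i := rfl
        rw [this, ht_apply, if_neg hiT, h0, zero_sub, neg_zero]
    -- norms with orthogonality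
    have hn_add : ‖t + u‖^2 = ‖t‖^2 + ‖u‖^2 := by
      rw [norm_add_sq_real, horth]; ring
    have hn_sub : ‖u - t‖^2 = ‖t‖^2 + ‖u‖^2 := by
      rw [norm_sub_sq_real, real_inner_comm, horth]; ring
    -- RIP
    have hR1 := (hRIP (t + u) hsp_add).1
    have hR2 := (hRIP (u - t) hsp_sub).2
    rw [hn_add] at hR1
    rw [hn_sub] at hR2
    -- polarization identity
    have hpol : ‖mulVecE A (t + u)‖^2 - ‖mulVecE A (u - t)‖^2
        = 4 * (inner ℝ (mulVecE A t) (mulVecE A u) : ℝ) := by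
      rw [mulVecE_add, mulVecE_sub, norm_add_sq_real, norm_sub_sq_real,
        real_inner_comm (mulVecE A u) (mulVecE A t)]
      ring
    nlinarith [hu_le_t, sq_nonneg ‖t‖, hδ0.le]
  -- pass to the hull : inner product bound
  have hlin : IsLinearMap ℝ (fun w' : EuclideanSpace ℝ (Fin n) =>
      (inner ℝ (mulVecE A t) (mulVecE A w') : ℝ)) := by
    constructor
    · intro x y'
      rw [mulVecE_add, inner_add_right]
    · intro c x
      rw [mulVecE_smul, real_inner_smul_right]
      rfl
  have hAtw : -δ * ‖t‖^2 ≤ (inner ℝ (mulVecE A t) (mulVecE A w) : ℝ) := by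
    have hsub : goodSet s α Tᶜ ⊆ {w' : EuclideanSpace ℝ (Fin n) |
        -δ * ‖t‖^2 ≤ (inner ℝ (mulVecE A t) (mulVecE A w') : ℝ)} := key
    exact convexHull_min hsub (convex_halfSpace_ge hlin _) hw_mem
  -- norm bound on w
  have hw_norm : ‖w‖ ≤ ‖t‖ := by
    have hsub : goodSet s α Tᶜ ⊆ Metric.closedBall 0 ‖t‖ := by
      intro u hu
      obtain ⟨husupp, hucard, huinf⟩ := hu
      rw [Metric.mem_closedBall, dist_zero_right]
      have hu_norm : ‖u‖^2 ≤ (s:ℝ) * α^2 := by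
        rw [enorm_sq]
        set D := Finset.univ.filter (fun i => u i ≠ 0) with hDdef
        have e1 : ∑ i, (u i)^2 = ∑ i ∈ D, (u i)^2 := by
          rw [Finset.sum_filter_of_ne]
          intro i _ hne
          intro h0
          exact hne (by rw [h0]; ring)
        have e2 : ∑ i ∈ D, (u i)^2 ≤ ∑ i ∈ D, α^2 := by
          apply Finset.sum_le_sum
          intro i _
          have := huinf i
          nlinarith [abs_nonneg (u i), sq_abs (u i)]
        have e3 : ∑ _i ∈ D, (α:ℝ)^2 = (D.card : ℝ) * α^2 := by
          rw [Finset.sum_const, nsmul_eq_mul]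
        have e4 : (D.card : ℝ) ≤ s := by exact_mod_cast hucard
        calc ∑ i, (u i)^2 = ∑ i ∈ D, (u i)^2 := e1
          _ ≤ (D.card : ℝ) * α^2 := by rw [← e3]; exact e2
          _ ≤ (s:ℝ) * α^2 := mul_le_mul_of_nonneg_right e4 (sq_nonneg α)
      have := le_trans hu_norm hsα2
      nlinarith [norm_nonneg u, norm_nonneg t]
    have := convexHull_min hsub (convex_closedBall _ _) hw_mem
    rw [Metric.mem_closedBall, dist_zero_right] at this
    exact this
  -- t is 2s-sparse
  have hsp_t : IsSparse (2*s) t := by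
    have hsub : (Finset.univ.filter fun i => t i ≠ 0) ⊆ T := by
      intro i hi
      rw [Finset.mem_filter] at hi
      by_contra hc
      exact hi.2 (by rw [ht_apply, if_neg hc])
    calc (Finset.univ.filter fun i => t i ≠ 0).card ≤ T.card := Finset.card_le_card hsub
      _ ≤ 2 * s := by rw [hTcard]; have := min_le_left s n; omega
  have hRt := hRIP t hsp_t
  -- ‖At‖ ≤ 2‖t‖
  have hAt_le : ‖mulVecE A t‖ ≤ 2 * ‖t‖ := by
    nlinarith [hRt.2, norm_nonneg (mulVecE A t), norm_nonneg t, sq_nonneg ‖t‖, hδ1]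
  -- inner product with A h
  have hdecomp : (inner ℝ (mulVecE A t) (mulVecE A h) : ℝ)
      = ‖mulVecE A t‖^2 + (inner ℝ (mulVecE A t) (mulVecE A w) : ℝ) := by
    rw [htw, mulVecE_add, inner_add_right, real_inner_self_eq_norm_sq]
  have hinner1 : (inner ℝ (mulVecE A t) (mulVecE A h) : ℝ) ≤ 2 * ξ * ‖mulVecE A t‖ := by
    calc (inner ℝ (mulVecE A t) (mulVecE A h) : ℝ)
        ≤ ‖mulVecE A t‖ * ‖mulVecE A h‖ := real_inner_le_norm _ _
      _ ≤ ‖mulVecE A t‖ * (2 * ξ) := by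
          exact mul_le_mul_of_nonneg_left hAh (norm_nonneg _)
      _ = 2 * ξ * ‖mulVecE A t‖ := by ring
  -- main chain
  have hmain : (1 - 2*δ) * ‖t‖^2 ≤ 4 * ξ * ‖t‖ := by
    have h1' : (1 - δ) * ‖t‖^2 ≤ ‖mulVecE A t‖^2 := hRt.1
    have h2' : ‖mulVecE A t‖^2 ≤ 2 * ξ * ‖mulVecE A t‖ + δ * ‖t‖^2 := by
      have := hdecomp
      linarith [hinner1, hAtw]
    have h3' : 2 * ξ * ‖mulVecE A t‖ ≤ 2 * ξ * (2 * ‖t‖) := by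
      apply mul_le_mul_of_nonneg_left hAt_le
      positivity
    linarith
  -- conclude
  have ht_final : 2 * ‖t‖ ≤ 8 / (1 - 2*δ) * ξ := by
    rcases eq_or_lt_of_le (norm_nonneg t) with h0 | hpos
    · rw [← h0]
      have h9 : (0:ℝ) ≤ 8 / (1 - 2*δ) * ξ := by positivity
      linarith
    · have : (1 - 2*δ) * ‖t‖ ≤ 4 * ξ := by
        have := mul_le_mul_of_nonneg_right hmain (le_of_lt (inv_pos.2 hpos))
        calc (1 - 2*δ) * ‖t‖ = (1 - 2*δ) * ‖t‖^2 * (‖t‖)⁻¹ := by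
              field_simp
          _ ≤ 4 * ξ * ‖t‖ * (‖t‖)⁻¹ := this
          _ = 4 * ξ := by field_simp
      rw [div_mul_eq_mul_div, le_div_iff₀ hden]
      linarith
  calc ‖xstar - xhat‖ = ‖h‖ := by rw [hh]
    _ ≤ ‖t‖ + ‖w‖ := by rw [htw]; exact norm_add_le _ _
    _ ≤ 2 * ‖t‖ := by linarith [hw_norm]
    _ ≤ 8 / (1 - 2*δ) * ξ := ht_final
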